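/- Let G be a strongly connected digraph. A chip-distribution x on G is terminating if and only if the divisor d⁺ − 1 − x (where d⁺ is the outdegree vector and 1 is the all-ones vector) is equi-effective, i.e., there exists y : V → ℤ with y ≥ 0 and y ∼ d⁺ − 1 − x. -/
import Mathlib


open Finset

variable {V : Type} [Fintype V] [DecidableEq V]

/-- The outdegree of a vertex `v` in the multidigraph with multiplicity function `m`
(`m u v` is the number of directed edges from `u` to `v`). -/
def outdeg (m : V → V → ℕ) (v : V) : ℤ := ∑ u, (m v u : ℤ)

/-- The indegree of a vertex. -/
def indeg (m : V → V → ℕ) (v : V) : ℤ := ∑ u, (m u v : ℤ)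

/-- The digraph is loopless. -/
def Loopless (m : V → V → ℕ) : Prop := ∀ v, m v v = 0

/-- The digraph is strongly connected: every vertex reaches every vertex on a directed path. -/
def StronglyConnected (m : V → V → ℕ) : Prop :=
  ∀ u v : V, Relation.ReflTransGen (fun a b => 0 < m a b) u v

/-- Firing vertex `v` in chip-distribution `x`: `v` sends a chip along each outgoing edge. -/
def fire (m : V → V → ℕ) (x : V → ℤ) (v : V) : V → ℤ :=
  fun u => x u + (m v u : ℤ) - (if u = v then outdeg m v else 0)

/-- The degree (total number of chips) of a chip-distribution / divisor. -/
def degSum (x : V → ℤ) : ℤ := ∑ v, x v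

/-- The state of the chip-firing game after `n` steps, starting from `x` and
firing the vertices `s 0, s 1, …` in this order. -/
def gameState (m : V → V → ℕ) (x : V → ℤ) (s : ℕ → V) : ℕ → (V → ℤ)
  | 0 => x
  | n + 1 => fire m (gameState m x s n) (s n)

/-- `s` encodes an infinite legal chip-firing game starting from `x`:
at each step the fired vertex is active. -/
def InfGame (m : V → V → ℕ) (x : V → ℤ) (s : ℕ → V) : Prop :=
  ∀ n, outdeg m (s n) ≤ gameState m x s n (s n)

/-- A chip-distribution is terminating if no infinite legal game starts from it. -/
def Terminating (m : V → V → ℕ) (x : V → ℤ) : Prop :=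
  ¬ ∃ s : ℕ → V, InfGame m x s

/-- The Laplacian of the digraph applied to `z`. -/
def lap (m : V → V → ℕ) (z : V → ℤ) : V → ℤ :=
  fun u => (∑ v, (m v u : ℤ) * z v) - outdeg m u * z u

/-- Linear equivalence: `x ∼ y` iff `x = y + L z` for some integer vector `z`. -/
def LinEquiv (m : V → V → ℕ) (x y : V → ℤ) : Prop :=
  ∃ z : V → ℤ, x = y + lap m z


set_option linter.unusedSectionVars false

lemma exists_pos_kernel [Nonempty V] (m : V → V → ℕ)
    (hconn : StronglyConnected m) :
    ∃ p : V → ℤ, (∀ v, 0 < p v) ∧ ∀ u, lap m p u = 0 := by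
  classical
  set Lm : Matrix V V ℚ := fun u w => (m w u : ℚ) - if u = w then (outdeg m u : ℚ) else 0 with hLm
  have hcol : ∀ w, ∑ u, Lm u w = 0 := by
    intro w
    have h1 : ∑ u, Lm u w = (∑ u, (m w u : ℚ)) - (outdeg m w : ℚ) := by
      rw [Finset.sum_sub_distrib]
      congr 1
      rw [Finset.sum_ite_eq' Finset.univ w (fun u => (outdeg m u : ℚ))]
      simp
    rw [h1, outdeg]
    push_cast
    ring
  have hdet : Lm.det = 0 := by
    rw [← Matrix.det_transpose]
    rw [← Matrix.exists_mulVec_eq_zero_iff]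
    refine ⟨(fun _ => 1), ?_, ?_⟩
    · intro h
      have := congrFun h (Classical.arbitrary V)
      simp at this
    · funext w
      simpa [Matrix.mulVec, Matrix.transpose, dotProduct] using hcol w
  obtain ⟨q, hq0, hqk⟩ := Matrix.exists_mulVec_eq_zero_iff.mpr hdet
  have hker : ∀ u, ∑ w, (m w u : ℚ) * q w = (outdeg m u : ℚ) * q u := by
    intro u
    have h0 := congrFun hqk u
    simp only [Matrix.mulVec, dotProduct, hLm, Pi.zero_apply] at h0
    have h2 : ∑ w, ((m w u : ℚ) - if u = w then (outdeg m u : ℚ) else 0) * q w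
        = ∑ w, (m w u : ℚ) * q w - (outdeg m u : ℚ) * q u := by
      rw [Finset.sum_congr rfl (fun w _ => show ((m w u : ℚ) - if u = w then (outdeg m u : ℚ) else 0) * q w
          = (m w u : ℚ) * q w - (if u = w then (outdeg m u : ℚ) * q w else 0) from by
          by_cases h : u = w <;> simp [h] <;> ring)]
      rw [Finset.sum_sub_distrib]
      congr 1
      simp
    rw [h2] at h0
    linarith
  -- absolute value is also in the kernel
  set qa : V → ℚ := fun v => |q v| with hqa
  set S : ℚ := ∑ v, (outdeg m v : ℚ) with hS
  have hod : ∀ v, (0:ℚ) ≤ (outdeg m v : ℚ) := by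
    intro v
    have : (0:ℤ) ≤ outdeg m v := Finset.sum_nonneg (fun u _ => Int.natCast_nonneg _)
    exact_mod_cast this
  have hSle : ∀ v, (outdeg m v : ℚ) ≤ S := fun v =>
    Finset.single_le_sum (fun u _ => hod u) (Finset.mem_univ v)
  have hS0 : (0:ℚ) ≤ S := Finset.sum_nonneg (fun u _ => hod u)
  set C : V → V → ℚ := fun u w => (m w u : ℚ) + (if u = w then S - (outdeg m u : ℚ) else 0) with hC
  have hCnn : ∀ u w, 0 ≤ C u w := by
    intro u w
    by_cases h : u = w <;> simp [hC, h]
    · linarith [hSle w, Nat.cast_nonneg (α := ℚ) (m w w)]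
  have hCq : ∀ u, ∑ w, C u w * q w = S * q u := by
    intro u
    have : ∑ w, C u w * q w = (∑ w, (m w u : ℚ) * q w) + (S - (outdeg m u : ℚ)) * q u := by
      rw [Finset.sum_congr rfl (fun w _ => show C u w * q w
          = (m w u : ℚ) * q w + (if u = w then (S - (outdeg m u : ℚ)) * q w else 0) from by
          by_cases h : u = w <;> simp [hC, h] <;> ring)]
      rw [Finset.sum_add_distrib]
      congr 1
      simp
    rw [this, hker u]
    ring
  have hCcol : ∀ w, ∑ u, C u w = S := by
    intro w
    have : ∑ u, C u w = (∑ u, (m w u : ℚ)) + (S - (outdeg m w : ℚ)) := by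
      rw [hC, Finset.sum_add_distrib]
      congr 1
      simp
    rw [this]
    have : (∑ u, (m w u : ℚ)) = (outdeg m w : ℚ) := by rw [outdeg]; push_cast; ring
    rw [this]; ring
  have hr : ∀ u, S * qa u ≤ ∑ w, C u w * qa w := by
    intro u
    have h1 : S * qa u = |S * q u| := by
      rw [abs_mul, abs_of_nonneg hS0]
    rw [h1, ← hCq u]
    calc |∑ w, C u w * q w| ≤ ∑ w, |C u w * q w| := Finset.abs_sum_le_sum_abs _ _
      _ = ∑ w, C u w * qa w := Finset.sum_congr rfl (fun w _ => by
          rw [abs_mul, abs_of_nonneg (hCnn u w)])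
  have hsum : ∑ u, (∑ w, C u w * qa w - S * qa u) = 0 := by
    rw [Finset.sum_sub_distrib, Finset.sum_comm]
    have : ∀ w, ∑ u, C u w * qa w = S * qa w := by
      intro w
      rw [← Finset.sum_mul, hCcol w]
    rw [Finset.sum_congr rfl (fun w _ => this w)]
    simp [mul_comm]
  have hqaker : ∀ u, ∑ w, (m w u : ℚ) * qa w = (outdeg m u : ℚ) * qa u := by
    intro u
    have h0 : ∑ w, C u w * qa w - S * qa u = 0 :=
      (Finset.sum_eq_zero_iff_of_nonneg (fun u _ => by linarith [hr u])).mp hsum u (Finset.mem_univ u)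
    have h1 : ∑ w, C u w * qa w = (∑ w, (m w u : ℚ) * qa w) + (S - (outdeg m u : ℚ)) * qa u := by
      rw [Finset.sum_congr rfl (fun w _ => show C u w * qa w
          = (m w u : ℚ) * qa w + (if u = w then (S - (outdeg m u : ℚ)) * qa w else 0) from by
          by_cases h : u = w <;> simp [hC, h] <;> ring)]
      rw [Finset.sum_add_distrib]
      congr 1
      simp
    rw [h1] at h0
    linarith
  -- positivity of qa by strong connectivity
  have hqann : ∀ v, 0 ≤ qa v := fun v => abs_nonneg _
  obtain ⟨v0, hv0⟩ : ∃ v, qa v ≠ 0 := by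
    by_contra h
    push_neg at h
    exact hq0 (funext fun v => abs_eq_zero.mp (h v))
  have hv0pos : 0 < qa v0 := lt_of_le_of_ne (hqann v0) (Ne.symm hv0)
  have hqapos : ∀ v, 0 < qa v := by
    intro v
    induction hconn v0 v with
    | refl => exact hv0pos
    | @tail b c hbc hrel ih =>
      have h1 : (m b c : ℚ) * qa b ≤ ∑ w, (m w c : ℚ) * qa w :=
        Finset.single_le_sum (fun w _ => mul_nonneg (Nat.cast_nonneg _) (hqann w))
          (Finset.mem_univ b)
      have h2 : (0:ℚ) < (m b c : ℚ) * qa b := by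
        apply mul_pos _ ih
        exact_mod_cast hrel
      have h3 : 0 < (outdeg m c : ℚ) * qa c := by
        rw [← hqaker c]; linarith
      by_contra h
      push_neg at h
      nlinarith [hod c]
  -- clear denominators
  set D : ℕ := ∏ v, (qa v).den with hD
  have hdvd : ∀ v, (qa v).den ∣ D := fun v => Finset.dvd_prod_of_mem _ (Finset.mem_univ v)
  have hDpos : 0 < D := Finset.prod_pos (fun v _ => (qa v).pos)
  set p : V → ℤ := fun v => (qa v).num * ((D / (qa v).den : ℕ) : ℤ) with hp
  have hcast : ∀ v, (p v : ℚ) = qa v * (D : ℚ) := by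
    intro v
    have h1 : ((qa v).den : ℚ) * ((D / (qa v).den : ℕ) : ℚ) = (D : ℚ) := by
      rw [← Nat.cast_mul, Nat.mul_div_cancel' (hdvd v)]
    have h2 : qa v * ((qa v).den : ℚ) = ((qa v).num : ℚ) := Rat.mul_den_eq_num (qa v)
    calc (p v : ℚ) = ((qa v).num : ℚ) * ((D / (qa v).den : ℕ) : ℚ) := by
          rw [hp, Int.cast_mul, Int.cast_natCast]
      _ = qa v * (((qa v).den : ℚ) * ((D / (qa v).den : ℕ) : ℚ)) := by rw [← h2]; ring
      _ = qa v * (D : ℚ) := by rw [h1]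
  refine ⟨p, ?_, ?_⟩
  · intro v
    apply mul_pos
    · exact Rat.num_pos.mpr (hqapos v)
    · have : 0 < D / (qa v).den := Nat.div_pos (Nat.le_of_dvd hDpos (hdvd v)) (qa v).pos
      exact_mod_cast this
  · intro u
    have : ((lap m p u : ℤ) : ℚ) = 0 := by
      have h1 : ((lap m p u : ℤ) : ℚ)
          = (∑ w, (m w u : ℚ) * (p w : ℚ)) - (outdeg m u : ℚ) * (p u : ℚ) := by
        rw [lap]
        push_cast
        ring
      rw [h1]
      rw [Finset.sum_congr rfl (fun w _ => by rw [hcast w]), hcast u]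
      have h2 : ∑ w, (m w u : ℚ) * (qa w * (D:ℚ)) = (∑ w, (m w u : ℚ) * qa w) * (D:ℚ) := by
        rw [Finset.sum_mul]
        exact Finset.sum_congr rfl (fun w _ => by ring)
      rw [h2, hqaker u]
      ring
    exact_mod_cast this

-- basic lap lemmas
lemma lap_add (m : V → V → ℕ) (z w : V → ℤ) (u : V) :
    lap m (fun v => z v + w v) u = lap m z u + lap m w u := by
  simp only [lap, mul_add]
  rw [Finset.sum_add_distrib]
  ring

lemma lap_zero (m : V → V → ℕ) (u : V) : lap m (fun _ => (0:ℤ)) u = 0 := by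
  simp [lap]

lemma lap_neg (m : V → V → ℕ) (z : V → ℤ) (u : V) :
    lap m (fun v => -z v) u = -lap m z u := by
  simp only [lap, mul_neg, Finset.sum_neg_distrib]
  ring

lemma lap_smul (m : V → V → ℕ) (c : ℤ) (z : V → ℤ) (u : V) :
    lap m (fun v => c * z v) u = c * lap m z u := by
  simp only [lap]
  rw [Finset.sum_congr rfl (fun v _ => show (m v u : ℤ) * (c * z v) = c * ((m v u : ℤ) * z v) from by ring),
    ← Finset.mul_sum]
  ring

lemma fire_eq_lap (m : V → V → ℕ) (c : V → ℤ) (w u : V) :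
    fire m c w u = c u + lap m (fun v => if v = w then 1 else 0) u := by
  have h1 : (∑ v, (m v u : ℤ) * (if v = w then 1 else 0)) = (m w u : ℤ) := by
    rw [Finset.sum_congr rfl (fun v _ => show (m v u : ℤ) * (if v = w then 1 else 0)
        = if v = w then (m v u : ℤ) else 0 from by by_cases h : v = w <;> simp [h])]
    simp
  by_cases h : u = w <;> simp [fire, lap, h1, h] <;> ring

-- firing counts
def cnt (s : ℕ → V) (n : ℕ) (v : V) : ℤ :=
  (((Finset.range n).filter (fun i => s i = v)).card : ℤ)

lemma cnt_zero (s : ℕ → V) (v : V) : cnt s 0 v = 0 := by simp [cnt]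

lemma cnt_nonneg (s : ℕ → V) (n : ℕ) (v : V) : 0 ≤ cnt s n v := Int.natCast_nonneg _

lemma cnt_succ (s : ℕ → V) (n : ℕ) (v : V) :
    cnt s (n+1) v = cnt s n v + (if s n = v then 1 else 0) := by
  simp only [cnt, Finset.range_add_one, Finset.filter_insert]
  by_cases h : s n = v
  · rw [if_pos h, if_pos h, Finset.card_insert_of_notMem (by simp)]
    push_cast; ring
  · rw [if_neg h, if_neg h, add_zero]

lemma gameState_eq_lap (m : V → V → ℕ) (x : V → ℤ) (s : ℕ → V) :
    ∀ n u, gameState m x s n u = x u + lap m (cnt s n) u := by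
  intro n
  induction n with
  | zero =>
    intro u
    have : cnt s 0 = fun _ => (0:ℤ) := funext (cnt_zero s)
    simp [gameState, this, lap_zero]
  | succ n ih =>
    intro u
    have h1 : cnt s (n+1) = fun v => cnt s n v + (if v = s n then 1 else 0) := by
      funext v
      rw [cnt_succ]
      congr 1
      by_cases h : s n = v
      · rw [if_pos h, if_pos h.symm]
      · rw [if_neg h, if_neg (fun hh => h hh.symm)]
    show fire m (gameState m x s n) (s n) u = _
    rw [fire_eq_lap, ih u, h1, lap_add]
    ring

-- greedy game construction for the forward direction
noncomputable def nxt [Nonempty V] (m : V → V → ℕ) (c : V → ℤ) : V :=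
  if h : ∃ v, outdeg m v ≤ c v then h.choose else Classical.arbitrary V

lemma nxt_spec [Nonempty V] (m : V → V → ℕ) (c : V → ℤ) (h : ∃ v, outdeg m v ≤ c v) :
    outdeg m (nxt m c) ≤ c (nxt m c) := by
  rw [nxt, dif_pos h]
  exact h.choose_spec

noncomputable def greedy [Nonempty V] (m : V → V → ℕ) (x : V → ℤ) : ℕ → (V → ℤ)
  | 0 => x
  | n + 1 => fire m (greedy m x n) (nxt m (greedy m x n))

lemma greedy_equiv [Nonempty V] (m : V → V → ℕ) (x : V → ℤ) (n : ℕ) :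
    ∃ z : V → ℤ, ∀ u, greedy m x n u = x u + lap m z u := by
  induction n with
  | zero => exact ⟨fun _ => 0, fun u => by simp [greedy, lap_zero]⟩
  | succ n ih =>
    obtain ⟨z, hz⟩ := ih
    refine ⟨fun v => z v + (if v = nxt m (greedy m x n) then 1 else 0), fun u => ?_⟩
    show fire m (greedy m x n) (nxt m (greedy m x n)) u = _
    rw [fire_eq_lap, hz u, lap_add]
    ring

lemma forward_dir [Nonempty V] (m : V → V → ℕ) (x : V → ℤ)
    (hterm : Terminating m x) :
    ∃ y : V → ℤ, 0 ≤ y ∧ LinEquiv m y (fun v => outdeg m v - 1 - x v) := by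
  by_contra hno
  push_neg at hno
  have hactive : ∀ z : V → ℤ, ∃ v, outdeg m v ≤ x v + lap m z v := by
    intro z
    by_contra h
    push_neg at h
    refine hno (fun v => outdeg m v - 1 - x v - lap m z v) (fun v => ?_) ⟨fun v => -z v, ?_⟩
    · have := h v
      simp only [Pi.zero_apply]
      omega
    · funext v
      simp only [Pi.add_apply, lap_neg]
      ring
  set s : ℕ → V := fun n => nxt m (greedy m x n) with hs
  have hgame : ∀ n, gameState m x s n = greedy m x n := by
    intro n
    induction n with
    | zero => rfl
    | succ n ih => show fire m (gameState m x s n) (s n) = _; rw [ih]; rfl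
  refine hterm ⟨s, fun n => ?_⟩
  rw [hgame n]
  obtain ⟨z, hz⟩ := greedy_equiv m x n
  have hex : ∃ v, outdeg m v ≤ greedy m x n v := by
    obtain ⟨v, hv⟩ := hactive z
    exact ⟨v, by rw [hz v]; exact hv⟩
  exact nxt_spec m (greedy m x n) hex


lemma backward_dir [Nonempty V] (m : V → V → ℕ) (hloop : Loopless m)
    (hconn : StronglyConnected m) (x : V → ℤ)
    (h : ∃ y : V → ℤ, 0 ≤ y ∧ LinEquiv m y (fun v => outdeg m v - 1 - x v)) :
    Terminating m x := by
  classical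
  obtain ⟨y, hy0, z, hyz⟩ := h
  rintro ⟨s, hs⟩
  obtain ⟨p, hppos, hpker⟩ := exists_pos_kernel m hconn
  set k : ℕ := Finset.univ.sup (fun v => (z v).toNat) with hk
  set z' : V → ℤ := fun v => -z v + (k:ℤ) * p v with hz'
  have hz'0 : ∀ v, 0 ≤ z' v := by
    intro v
    have h1 : z v ≤ ((z v).toNat : ℤ) := Int.self_le_toNat _
    have h2 : ((z v).toNat : ℤ) ≤ (k : ℤ) := by
      exact_mod_cast Finset.le_sup (f := fun v => (z v).toNat) (Finset.mem_univ v)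
    have h3 : 1 ≤ p v := hppos v
    have h4 : (k:ℤ) * 1 ≤ (k:ℤ) * p v :=
      mul_le_mul_of_nonneg_left h3 (Int.natCast_nonneg k)
    simp only [hz']
    nlinarith
  have hlapz' : ∀ u, lap m z' u = -lap m z u := by
    intro u
    have h5 : lap m z' u = lap m (fun v => -z v) u + lap m (fun v => (k:ℤ) * p v) u := by
      rw [← lap_add]
    rw [h5, lap_smul, hpker u, mul_zero, add_zero, lap_neg]
  have hstable : ∀ v, x v + lap m z' v ≤ outdeg m v - 1 := by
    intro v
    have h1 := congrFun hyz v
    have h2 := hy0 v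
    simp only [Pi.add_apply, Pi.zero_apply] at h1 h2
    rw [hlapz' v]
    omega
  -- some vertex fires with a large prior count
  have hbad : ∃ n, z' (s n) ≤ cnt s n (s n) := by
    obtain ⟨v, hinf⟩ := Finite.exists_infinite_fiber s
    have hinf' : (s ⁻¹' {v}).Infinite := Set.infinite_coe_iff.mp hinf
    obtain ⟨t, hts, htc⟩ := hinf'.exists_subset_card_eq ((z' v).toNat + 1)
    have htne : t.Nonempty := Finset.card_pos.mp (by omega)
    set n : ℕ := t.max' htne with hn
    have hsn : s n = v := hts (t.max'_mem htne)
    refine ⟨n, ?_⟩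
    rw [hsn]
    have hsub : t.erase n ⊆ (Finset.range n).filter (fun i => s i = v) := by
      intro i hi
      obtain ⟨hne, hit⟩ := Finset.mem_erase.mp hi
      refine Finset.mem_filter.mpr ⟨Finset.mem_range.mpr ?_, hts hit⟩
      exact lt_of_le_of_ne (t.le_max' i hit) hne
    have hcard : (z' v).toNat ≤ ((Finset.range n).filter (fun i => s i = v)).card := by
      have := Finset.card_le_card hsub
      rw [Finset.card_erase_of_mem (t.max'_mem htne), htc] at this
      omega
    calc z' v ≤ ((z' v).toNat : ℤ) := Int.self_le_toNat _
      _ ≤ cnt s n v := by simp only [cnt]; exact_mod_cast hcard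
  -- minimal such time
  set nstar : ℕ := Nat.find hbad with hnstar
  set v : V := s nstar with hv
  have hge : z' v ≤ cnt s nstar v := Nat.find_spec hbad
  have hle : ∀ u, u ≠ v → cnt s nstar u ≤ z' u := by
    intro u hu
    by_contra hc
    push_neg at hc
    set F : Finset ℕ := (Finset.range nstar).filter (fun i => s i = u) with hF
    have hFne : F.Nonempty := by
      rw [← Finset.card_pos]
      have : (0:ℤ) < (F.card : ℤ) := lt_of_le_of_lt (hz'0 u) hc
      exact_mod_cast this
    set n' : ℕ := F.max' hFne with hn'
    have hn'mem := F.max'_mem hFne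
    have hn'lt : n' < nstar := Finset.mem_range.mp (Finset.mem_filter.mp hn'mem).1
    have hsn' : s n' = u := (Finset.mem_filter.mp hn'mem).2
    have hFeq : F = (Finset.range (n'+1)).filter (fun i => s i = u) := by
      apply Finset.ext
      intro i
      simp only [hF, Finset.mem_filter, Finset.mem_range]
      constructor
      · rintro ⟨hi, hsi⟩
        exact ⟨Nat.lt_succ_of_le (F.le_max' i (Finset.mem_filter.mpr ⟨Finset.mem_range.mpr hi, hsi⟩)), hsi⟩
      · rintro ⟨hi, hsi⟩
        exact ⟨lt_of_lt_of_le hi hn'lt, hsi⟩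
    have hcnt : cnt s nstar u = cnt s n' u + 1 := by
      have h1 : cnt s nstar u = cnt s (n'+1) u := by
        simp only [cnt]
        rw [← hFeq, hF]
      rw [h1, cnt_succ, if_pos hsn']
    have : z' u ≤ cnt s n' u := by omega
    have hbad' : z' (s n') ≤ cnt s n' (s n') := by rw [hsn']; exact this
    exact absurd hbad' (Nat.find_min hbad hn'lt)
  -- contradiction with stability
  have hleg := hs nstar
  rw [gameState_eq_lap m x s nstar] at hleg
  have hkey : lap m (cnt s nstar) v ≤ lap m z' v := by
    have hsum : ∑ u, (m u v : ℤ) * cnt s nstar u ≤ ∑ u, (m u v : ℤ) * z' u := by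
      apply Finset.sum_le_sum
      intro u _
      by_cases hu : u = v
      · rw [hu, hloop v]
        simp
      · exact mul_le_mul_of_nonneg_left (hle u hu) (Int.natCast_nonneg _)
    have hod : (0:ℤ) ≤ outdeg m v := Finset.sum_nonneg (fun u _ => Int.natCast_nonneg _)
    have h2 : outdeg m v * z' v ≤ outdeg m v * cnt s nstar v :=
      mul_le_mul_of_nonneg_left hge hod
    simp only [lap]
    omega
  rw [← hv] at hleg
  have hst := hstable v
  omega

/-- On a strongly connected digraph, a chip-distribution `x` is terminating if and only if
the divisor `d⁺ - 1 - x` is equi-effective. -/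
theorem terminating_iff_dual_equi_effective
    {V : Type} [Fintype V] [DecidableEq V] [Nonempty V]
    (m : V → V → ℕ) (hloop : Loopless m) (hconn : StronglyConnected m)
    (x : V → ℤ) :
    Terminating m x ↔
      ∃ y : V → ℤ, 0 ≤ y ∧ LinEquiv m y (fun v => outdeg m v - 1 - x v) := by
  constructor
  · exact forward_dir m x
  · exact backward_dir m hloop hconn x
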